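/- arXiv:1705.08972 — 3 statements merged into one kernel-verified Lean document; each statement's English description precedes it below -/
import Mathlib

section
/- Let E be a complex Banach space, let C₁ > 0, p ≥ 0, let a, b be real numbers with 1 ≤ a < b, and let t ≥ 3. Let R denote the closed rectangle {λ ∈ ℂ : a ≤ Re λ ≤ b, −(log t)/t ≤ Im λ ≤ 0}. Suppose h : ℂ → E is complex-differentiable on an open set containing R and satisfies ‖h(λ)‖ ≤ C₁ (1 + Re λ)^{−p} for all λ ∈ R. Then ‖∫_a^b e^{−iλt} h(λ) dλ‖_E ≤ C₁ t^{−1} (3 + (b − a)) (1 + a)^{−p}, where the integral is over the real segment [a,b]. -/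
open MeasureTheory

set_option maxHeartbeats 1000000 in
theorem stmt6 (E : Type*) [NormedAddCommGroup E] [NormedSpace ℂ E] [CompleteSpace E]
    (C₁ p a b t : ℝ) (hC₁ : 0 < C₁) (hp : 0 ≤ p) (ha : 1 ≤ a) (hab : a < b) (ht : 3 ≤ t)
    (h : ℂ → E) (U : Set ℂ) (hU : IsOpen U)
    (hRU : {lam : ℂ | a ≤ lam.re ∧ lam.re ≤ b ∧ -(Real.log t) / t ≤ lam.im ∧ lam.im ≤ 0} ⊆ U)
    (hdiff : DifferentiableOn ℂ h U)
    (hbound : ∀ lam : ℂ, a ≤ lam.re → lam.re ≤ b → -(Real.log t) / t ≤ lam.im → lam.im ≤ 0 →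
      ‖h lam‖ ≤ C₁ * (1 + lam.re) ^ (-p)) :
    ‖∫ x in a..b, Complex.exp (-Complex.I * x * t) • h x‖
      ≤ C₁ * t⁻¹ * (3 + (b - a)) * (1 + a) ^ (-p) := by
  have ht0 : (0:ℝ) < t := by linarith
  set L : ℝ := Real.log t / t with hLdef
  have hlogt : 0 < Real.log t := Real.log_pos (by linarith)
  have hL0 : 0 < L := div_pos hlogt ht0
  have hLneg : -(Real.log t) / t = -L := by rw [neg_div]
  set C : ℝ := C₁ * (1 + a) ^ (-p) with hCdef
  have hC0 : 0 < C := mul_pos hC₁ (Real.rpow_pos_of_pos (by linarith) _)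
  set f : ℂ → E := fun z => Complex.exp (-Complex.I * z * t) • h z with hfdef
  -- the rectangle is inside U
  have hsub : (Set.uIcc (⟨a, -L⟩ : ℂ).re (⟨b, 0⟩ : ℂ).re ×ℂ
      Set.uIcc (⟨a, -L⟩ : ℂ).im (⟨b, 0⟩ : ℂ).im) ⊆ U := by
    intro z hz
    obtain ⟨h1, h2⟩ := hz
    simp only [Set.mem_preimage, Set.uIcc_of_le (le_of_lt hab), Set.mem_Icc] at h1
    simp only [Set.mem_preimage, Set.uIcc_of_le (show -L ≤ (0:ℝ) by linarith),
      Set.mem_Icc] at h2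
    exact hRU ⟨h1.1, h1.2, by rw [hLneg]; exact h2.1, h2.2⟩
  have hfd : DifferentiableOn ℂ f U := by
    apply DifferentiableOn.smul _ hdiff
    exact (Complex.differentiable_exp.comp (by fun_prop)).differentiableOn
  have key := Complex.integral_boundary_rect_eq_zero_of_differentiableOn f ⟨a, -L⟩ ⟨b, 0⟩
    (hfd.mono hsub)
  simp only [Complex.ofReal_zero, zero_mul, add_zero] at key
  have hit : (0:ℝ) ≤ t⁻¹ := by positivity
  -- pointwise norm formula
  have hnorm : ∀ z : ℂ, ‖f z‖ = Real.exp (z.im * t) * ‖h z‖ := by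
    intro z
    rw [hfdef]
    simp only [norm_smul, Complex.norm_exp]
    congr 2
    simp [Complex.mul_re]
  have hrpow : ∀ x : ℝ, a ≤ x → C₁ * (1 + x) ^ (-p) ≤ C := by
    intro x hx
    rw [hCdef]
    exact mul_le_mul_of_nonneg_left
      (Real.rpow_le_rpow_of_nonpos (by linarith) (by linarith) (by linarith)) hC₁.le
  have hexpL : Real.exp (-L * t) = t⁻¹ := by
    rw [hLdef, neg_mul, div_mul_cancel₀ _ (ne_of_gt ht0), Real.exp_neg,
      Real.exp_log ht0]
  -- bound for the bottom side
  have hB : ‖∫ x : ℝ in a..b, f (x + (-L : ℝ) * Complex.I)‖ ≤ C * t⁻¹ * |b - a| := by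
    apply intervalIntegral.norm_integral_le_of_norm_le_const
    intro x hx
    rw [Set.uIoc_of_le hab.le, Set.mem_Ioc] at hx
    have hre : ((x : ℂ) + (-L : ℝ) * Complex.I).re = x := by simp
    have him : ((x : ℂ) + (-L : ℝ) * Complex.I).im = -L := by simp
    rw [hnorm, him]
    calc Real.exp (-L * t) * ‖h ((x : ℂ) + (-L : ℝ) * Complex.I)‖
        ≤ t⁻¹ * C := by
          rw [hexpL]
          refine mul_le_mul_of_nonneg_left ?_ hit
          refine le_trans (hbound _ ?_ ?_ ?_ ?_) ?_
          · rw [hre]; exact hx.1.le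
          · rw [hre]; exact hx.2
          · rw [him, hLneg]
          · rw [him]; linarith
          · rw [hre]; exact hrpow x hx.1.le
      _ = C * t⁻¹ := mul_comm _ _
  -- bound for the vertical sides
  have hside : ∀ c : ℝ, a ≤ c → c ≤ b →
      ‖∫ y : ℝ in -L..0, f ((c : ℂ) + (y : ℝ) * Complex.I)‖ ≤ C * t⁻¹ := by
    intro c hc1 hc2
    have hmem : ∀ y : ℝ, y ∈ Set.uIcc (-L) 0 → ((c : ℂ) + (y : ℝ) * Complex.I) ∈ U := by
      intro y hy
      rw [Set.uIcc_of_le (by linarith : -L ≤ (0:ℝ)), Set.mem_Icc] at hy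
      refine hRU ⟨?_, ?_, ?_, ?_⟩ <;> simp [hc1, hc2, hLneg, hy.1, hy.2]
    have hcont : ContinuousOn (fun y : ℝ => f ((c : ℂ) + (y : ℝ) * Complex.I))
        (Set.uIcc (-L) 0) :=
      hfd.continuousOn.comp (Continuous.continuousOn (by fun_prop)) hmem
    have hbd : ∀ y ∈ Set.Icc (-L) (0:ℝ),
        ‖f ((c : ℂ) + (y : ℝ) * Complex.I)‖ ≤ C * Real.exp (t * y) := by
      intro y hy
      have him : ((c : ℂ) + (y : ℝ) * Complex.I).im = y := by simp
      have hre : ((c : ℂ) + (y : ℝ) * Complex.I).re = c := by simp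
      rw [hnorm, him, mul_comm C _, mul_comm t y]
      refine mul_le_mul_of_nonneg_left ?_ (Real.exp_nonneg _)
      refine le_trans (hbound _ ?_ ?_ ?_ ?_) ?_
      · rw [hre]; exact hc1
      · rw [hre]; exact hc2
      · rw [him, hLneg]; exact hy.1
      · rw [him]; exact hy.2
      · rw [hre]; exact hrpow c hc1
    calc ‖∫ y : ℝ in -L..0, f ((c : ℂ) + (y : ℝ) * Complex.I)‖
        ≤ ∫ y : ℝ in -L..0, ‖f ((c : ℂ) + (y : ℝ) * Complex.I)‖ :=
          intervalIntegral.norm_integral_le_integral_norm (by linarith)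
      _ ≤ ∫ y : ℝ in -L..0, C * Real.exp (t * y) := by
          refine intervalIntegral.integral_mono_on (by linarith)
            (hcont.norm.intervalIntegrable)
            ((by fun_prop : Continuous fun y : ℝ => C * Real.exp (t * y)).intervalIntegrable _ _) hbd
      _ = C * ∫ y : ℝ in -L..0, Real.exp (t * y) := by
          rw [intervalIntegral.integral_const_mul]
      _ ≤ C * t⁻¹ := by
          have hint : ∫ y : ℝ in -L..0, Real.exp (t * y)
              = t⁻¹ * (Real.exp (t * 0) - Real.exp (t * (-L))) := by
            rw [intervalIntegral.integral_comp_mul_left (fun x => Real.exp x)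
              (ne_of_gt ht0), integral_exp, smul_eq_mul]
          rw [hint]
          refine mul_le_mul_of_nonneg_left ?_ hC0.le
          have h1 : Real.exp (t * (-L)) = t⁻¹ := by rw [mul_comm]; exact hexpL
          have h2 : (0:ℝ) < Real.exp (t * (-L)) := Real.exp_pos _
          rw [mul_zero, Real.exp_zero]
          nlinarith
  -- assemble
  have hT : (∫ x : ℝ in a..b, Complex.exp (-Complex.I * (x : ℂ) * (t : ℂ)) • h x)
      = (∫ x : ℝ in a..b, f ((x : ℂ) + (-L : ℝ) * Complex.I))
        + Complex.I • (∫ y : ℝ in -L..0, f ((b : ℂ) + (y : ℝ) * Complex.I))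
        - Complex.I • (∫ y : ℝ in -L..0, f ((a : ℂ) + (y : ℝ) * Complex.I)) := by
    have h0 : (∫ x : ℝ in a..b, Complex.exp (-Complex.I * (x : ℂ) * (t : ℂ)) • h x)
        = ∫ x : ℝ in a..b, f (x : ℂ) := rfl
    rw [h0, ← sub_eq_zero, ← neg_eq_zero, ← key]
    abel
  rw [hT]
  have habs : |b - a| = b - a := abs_of_pos (by linarith)
  calc ‖(∫ x : ℝ in a..b, f ((x : ℂ) + (-L : ℝ) * Complex.I))
        + Complex.I • (∫ y : ℝ in -L..0, f ((b : ℂ) + (y : ℝ) * Complex.I))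
        - Complex.I • (∫ y : ℝ in -L..0, f ((a : ℂ) + (y : ℝ) * Complex.I))‖
      ≤ ‖(∫ x : ℝ in a..b, f ((x : ℂ) + (-L : ℝ) * Complex.I))
          + Complex.I • (∫ y : ℝ in -L..0, f ((b : ℂ) + (y : ℝ) * Complex.I))‖
        + ‖Complex.I • (∫ y : ℝ in -L..0, f ((a : ℂ) + (y : ℝ) * Complex.I))‖ :=
        norm_sub_le _ _
    _ ≤ ‖(∫ x : ℝ in a..b, f ((x : ℂ) + (-L : ℝ) * Complex.I))‖
        + ‖Complex.I • (∫ y : ℝ in -L..0, f ((b : ℂ) + (y : ℝ) * Complex.I))‖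
        + ‖Complex.I • (∫ y : ℝ in -L..0, f ((a : ℂ) + (y : ℝ) * Complex.I))‖ := by
        gcongr
        exact norm_add_le _ _
    _ ≤ C * t⁻¹ * (b - a) + C * t⁻¹ + C * t⁻¹ := by
        have s1 := hside b hab.le le_rfl
        have s2 := hside a le_rfl hab.le
        have b1 := hB
        rw [habs] at b1
        simp only [norm_smul, Complex.norm_I, one_mul]
        gcongr <;> assumption
    _ ≤ C₁ * t⁻¹ * (3 + (b - a)) * (1 + a) ^ (-p) := by
        have : C₁ * t⁻¹ * (3 + (b - a)) * (1 + a) ^ (-p)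
            = C * t⁻¹ * (3 + (b - a)) := by rw [hCdef]; ring
        rw [this]
        nlinarith [mul_nonneg hC0.le hit]
end

section
/- Let E be a complex Banach space, let C₁ > 0, p ≥ 0, let a, b be real numbers with 1 ≤ a < b, and let t ≥ 3. Let R denote the closed rectangle {λ ∈ ℂ : a ≤ Re λ ≤ b, 0 ≤ Im λ ≤ 3(log t)/t}. Suppose h : ℂ → E is complex-differentiable on an open set containing R and satisfies ‖h(λ)‖ ≤ C₁ (1 + Re λ)^{−p} for all λ ∈ R. Then ‖∫_a^b e^{iλt} h(λ) dλ‖_E ≤ C₁ (1 + a)^{−p} (2 t^{−1} + (b − a) t^{−3}), where the integral is over the real segment [a,b]. -/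
open MeasureTheory Complex Set

theorem stmt7 (E : Type*) [NormedAddCommGroup E] [NormedSpace ℂ E] [CompleteSpace E]
    (C₁ p a b t : ℝ) (hC₁ : 0 < C₁) (hp : 0 ≤ p) (ha : 1 ≤ a) (hab : a < b) (ht : 3 ≤ t)
    (h : ℂ → E) (U : Set ℂ) (hU : IsOpen U)
    (hRU : {lam : ℂ | a ≤ lam.re ∧ lam.re ≤ b ∧ 0 ≤ lam.im ∧ lam.im ≤ 3 * Real.log t / t} ⊆ U)
    (hdiff : DifferentiableOn ℂ h U)
    (hbound : ∀ lam : ℂ, a ≤ lam.re → lam.re ≤ b → 0 ≤ lam.im → lam.im ≤ 3 * Real.log t / t →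
      ‖h lam‖ ≤ C₁ * (1 + lam.re) ^ (-p)) :
    ‖∫ x in a..b, Complex.exp (Complex.I * x * t) • h x‖
      ≤ C₁ * (1 + a) ^ (-p) * (2 * t⁻¹ + (b - a) * (t ^ 3)⁻¹) := by
  have ht0 : (0:ℝ) < t := by linarith
  set σ : ℝ := 3 * Real.log t / t with hσdef
  have hlogt : 0 < Real.log t := Real.log_pos (by linarith)
  have hσ0 : 0 ≤ σ := by positivity
  have htσ : t * σ = 3 * Real.log t := by rw [hσdef, mul_div_assoc', mul_comm, mul_div_assoc, div_self ht0.ne', mul_one]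
  have hexpσ : Real.exp (-(t * σ)) = (t ^ 3)⁻¹ := by
    have h3 : Real.exp (t * σ) = t ^ 3 := by
      rw [htσ, mul_comm, Real.exp_mul, Real.exp_log ht0]
      rw [show (3:ℝ) = ((3:ℕ):ℝ) by norm_num, Real.rpow_natCast]
    rw [Real.exp_neg, h3]
  set f : ℂ → E := fun z => Complex.exp (Complex.I * z * t) • h z with hf
  set C : ℝ := C₁ * (1 + a) ^ (-p) with hC
  have hCpos : 0 < C := mul_pos hC₁ (Real.rpow_pos_of_pos (by linarith) _)
  have hrect : ∀ z : ℂ, a ≤ z.re → z.re ≤ b → 0 ≤ z.im → z.im ≤ σ → z ∈ U := fun z h1 h2 h3 h4 =>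
    hRU ⟨h1, h2, h3, h4⟩
  -- key pointwise bound
  have key : ∀ x y : ℝ, a ≤ x → x ≤ b → 0 ≤ y → y ≤ σ →
      ‖f (x + y * Complex.I)‖ ≤ C * Real.exp (-(t * y)) := by
    intro x y h1 h2 h3 h4
    have hre : (Complex.I * (↑x + ↑y * Complex.I) * ↑t).re = -(t * y) := by
      simp [Complex.mul_re, Complex.mul_im]; ring
    have hz : ((↑x + ↑y * Complex.I : ℂ)).re = x := by simp
    have hzi : ((↑x + ↑y * Complex.I : ℂ)).im = y := by simp
    rw [hf]
    simp only [norm_smul, Complex.norm_exp, hre]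
    rw [mul_comm]
    apply mul_le_mul _ le_rfl (Real.exp_nonneg _) (le_of_lt hCpos)
    calc ‖h (↑x + ↑y * Complex.I)‖ ≤ C₁ * (1 + x) ^ (-p) := by
          have := hbound (↑x + ↑y * Complex.I) (by rw [hz]; exact h1) (by rw [hz]; exact h2)
            (by rw [hzi]; exact h3) (by rw [hzi]; exact h4)
          rwa [hz] at this
      _ ≤ C := by
          rw [hC]
          exact mul_le_mul_of_nonneg_left
            (Real.rpow_le_rpow_of_nonpos (by linarith) (by linarith) (by linarith)) hC₁.le
  have hfdiff : DifferentiableOn ℂ f U := by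
    apply DifferentiableOn.smul _ hdiff
    exact ((differentiable_id.const_mul _ |>.mul_const _).cexp).differentiableOn
  have hwre : ((↑b : ℂ) + ↑σ * Complex.I).re = b := by simp
  have hwim : ((↑b : ℂ) + ↑σ * Complex.I).im = σ := by simp
  -- Cauchy
  have hcauchy := Complex.integral_boundary_rect_eq_zero_of_differentiableOn f (↑a)
    ((↑b) + ↑σ * Complex.I) (by
      apply hfdiff.mono
      intro z hz
      rw [Complex.mem_reProdIm, Complex.ofReal_re, Complex.ofReal_im, hwre, hwim,
        Set.uIcc_of_le hab.le, Set.uIcc_of_le hσ0] at hz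
      exact hrect z hz.1.1 hz.1.2 hz.2.1 hz.2.2)
  rw [Complex.ofReal_re, Complex.ofReal_im, hwre, hwim] at hcauchy
  have h0 : ∀ x : ℝ, ((↑x : ℂ) + ↑(0:ℝ) * Complex.I) = ↑x := by intro x; simp
  simp only [h0] at hcauchy
  set T := ∫ x in a..b, f (↑x + ↑σ * Complex.I) with hT
  set A := ∫ y in (0:ℝ)..σ, f (↑a + ↑y * Complex.I) with hA
  set B := ∫ y in (0:ℝ)..σ, f (↑b + ↑y * Complex.I) with hB
  have heq : (∫ x in a..b, f ↑x) = T - Complex.I • B + Complex.I • A := by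
    have h' : (∫ x in a..b, f ↑x) - (T - Complex.I • B + Complex.I • A) = 0 := by
      rw [← hcauchy]; abel
    exact sub_eq_zero.mp h'
  -- bounds
  have hvert : ∀ c : ℝ, a ≤ c → c ≤ b →
      ‖∫ y in (0:ℝ)..σ, f (↑c + ↑y * Complex.I)‖ ≤ C * t⁻¹ := by
    intro c hc1 hc2
    have hle : ‖∫ y in (0:ℝ)..σ, f (↑c + ↑y * Complex.I)‖
        ≤ |∫ y in (0:ℝ)..σ, C * Real.exp (-(t * y))| := by
      apply intervalIntegral.norm_integral_le_abs_of_norm_le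
      · filter_upwards [ae_restrict_mem measurableSet_uIoc] with y hy
        rw [Set.uIoc_of_le hσ0] at hy
        exact key c y hc1 hc2 hy.1.le hy.2
      · exact ((continuous_const.mul (Real.continuous_exp.comp (continuous_const.mul continuous_id).neg)).intervalIntegrable _ _)
    refine hle.trans ?_
    have hval : (∫ y in (0:ℝ)..σ, Real.exp (-(t * y))) = (1 - Real.exp (-(t * σ))) / t := by
      have := intervalIntegral.integral_comp_mul_left (a := 0) (b := σ) Real.exp
        (c := -t) (neg_ne_zero.mpr ht0.ne')
      simp only [neg_mul] at this ⊢
      rw [this]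
      rw [integral_exp]
      simp [smul_eq_mul]
      field_simp
      ring
    rw [intervalIntegral.integral_const_mul, hval, _root_.abs_of_nonneg]
    · apply mul_le_mul_of_nonneg_left _ hCpos.le
      rw [div_le_iff₀ ht0, inv_mul_cancel₀ ht0.ne']
      have := Real.exp_nonneg (-(t * σ))
      linarith
    · apply mul_nonneg hCpos.le
      apply div_nonneg _ ht0.le
      have : Real.exp (-(t * σ)) ≤ 1 := Real.exp_le_one_iff.mpr (by nlinarith)
      linarith
  have htop : ‖T‖ ≤ C * (t ^ 3)⁻¹ * (b - a) := by
    have : ‖T‖ ≤ C * (t ^ 3)⁻¹ * |b - a| := by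
      rw [hT]
      apply intervalIntegral.norm_integral_le_of_norm_le_const
      intro x hx
      rw [Set.uIoc_of_le hab.le] at hx
      have := key x σ hx.1.le hx.2 hσ0 le_rfl
      rwa [hexpσ] at this
    rwa [_root_.abs_of_nonneg (by linarith)] at this
  rw [heq]
  calc ‖T - Complex.I • B + Complex.I • A‖ ≤ ‖T - Complex.I • B‖ + ‖Complex.I • A‖ :=
        norm_add_le _ _
    _ ≤ ‖T‖ + ‖Complex.I • B‖ + ‖Complex.I • A‖ := by
        gcongr; exact norm_sub_le _ _
    _ = ‖T‖ + ‖B‖ + ‖A‖ := by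
        rw [norm_smul, norm_smul]; simp
    _ ≤ C * (t ^ 3)⁻¹ * (b - a) + C * t⁻¹ + C * t⁻¹ := by
        have hBle : ‖B‖ ≤ C * t⁻¹ := by rw [hB]; exact hvert b hab.le le_rfl
        have hAle : ‖A‖ ≤ C * t⁻¹ := by rw [hA]; exact hvert a le_rfl hab.le
        exact add_le_add (add_le_add htop hBle) hAle
    _ = C * (2 * t⁻¹ + (b - a) * (t ^ 3)⁻¹) := by ring
end

section
/- Let M > 0 and let f₁, f₂ : ℝ → ℂ be continuous with support contained in (0, M). Let f̃ᵢ denote their odd extensions, f̃ᵢ(x) = fᵢ(x) for x ≥ 0 and f̃ᵢ(x) = −fᵢ(−x) for x < 0, and define u(t,r) = ½(f̃₁(r + t) + f̃₁(r − t)) + ½ ∫_{r−t}^{r+t} f̃₂(s) ds. Then for every r ≥ 0 and every t > r + M, u(t,r) = 0. -/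
open MeasureTheory

/-- The odd extension of a function on `[0,∞)` to `ℝ`. -/
noncomputable def oddExt (f : ℝ → ℂ) (x : ℝ) : ℂ :=
  if 0 ≤ x then f x else -f (-x)

lemma oddExt_odd (f : ℝ → ℂ) (hf0 : f 0 = 0) (x : ℝ) :
    oddExt f (-x) = -oddExt f x := by
  unfold oddExt
  rcases lt_trichotomy x 0 with h | h | h
  · rw [if_neg (not_le.2 h), if_pos (by linarith), neg_neg]
  · simp [h, hf0]
  · rw [if_pos (le_of_lt h), if_neg (by simpa using h), neg_neg]

lemma oddExt_continuous (f : ℝ → ℂ) (hc : Continuous f) (hf0 : f 0 = 0) :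
    Continuous (oddExt f) := by
  have : oddExt f = fun x => if (0:ℝ) ≤ x then f x else -f (-x) := rfl
  rw [this]
  apply Continuous.if_le (hc) ((hc.comp continuous_neg).neg) continuous_const continuous_id
  intro x hx
  have : x = 0 := by simpa using hx.symm
  simp [this, hf0]

lemma integral_oddExt_symm (f : ℝ → ℂ) (hc : Continuous f) (hf0 : f 0 = 0) (a : ℝ) :
    (∫ s in (-a)..a, oddExt f s) = 0 := by
  have h1 : (∫ s in (-a)..a, oddExt f (-s)) = ∫ s in (-a)..a, oddExt f s := by
    rw [intervalIntegral.integral_comp_neg (fun x => oddExt f x)]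
    simp
  have h2 : (∫ s in (-a)..a, oddExt f (-s)) = -∫ s in (-a)..a, oddExt f s := by
    simp_rw [oddExt_odd f hf0]
    exact intervalIntegral.integral_neg
  have := h1.symm.trans h2
  linear_combination (this : _) / 2

theorem stmt11 (M : ℝ) (hM : 0 < M) (f₁ f₂ : ℝ → ℂ)
    (hc1 : Continuous f₁) (hc2 : Continuous f₂)
    (hs1 : Function.support f₁ ⊆ Set.Ioo 0 M) (hs2 : Function.support f₂ ⊆ Set.Ioo 0 M)
    (r t : ℝ) (hr : 0 ≤ r) (ht : r + M < t) :
    (1 / 2) * (oddExt f₁ (r + t) + oddExt f₁ (r - t))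
      + (1 / 2) * ∫ s in (r - t)..(r + t), oddExt f₂ s = 0 := by
  have hz1 : ∀ x : ℝ, x ∉ Set.Ioo 0 M → f₁ x = 0 := fun x hx =>
    Function.notMem_support.1 (fun h => hx (hs1 h))
  have hz2 : ∀ x : ℝ, x ∉ Set.Ioo 0 M → f₂ x = 0 := fun x hx =>
    Function.notMem_support.1 (fun h => hx (hs2 h))
  have hf10 : f₁ 0 = 0 := hz1 0 (by simp)
  have hf20 : f₂ 0 = 0 := hz2 0 (by simp)
  -- oddExt f₂ vanishes outside (-M, M)
  have hzz : ∀ x : ℝ, M ≤ |x| → oddExt f₂ x = 0 := by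
    intro x hx
    unfold oddExt
    split_ifs with h
    · exact hz2 x (by rw [abs_of_nonneg h] at hx; simp [Set.mem_Ioo]; intro; linarith)
    · push_neg at h
      rw [abs_of_neg h] at hx
      rw [hz2 (-x) (by simp [Set.mem_Ioo]; intro; linarith), neg_zero]
  -- first terms
  have h1 : oddExt f₁ (r + t) = 0 := by
    unfold oddExt
    rw [if_pos (by linarith), hz1 _ (by simp [Set.mem_Ioo]; intro; linarith)]
  have h2 : oddExt f₁ (r - t) = 0 := by
    unfold oddExt
    rw [if_neg (by push_neg; linarith), hz1 _ (by simp [Set.mem_Ioo]; intro; linarith),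
      neg_zero]
  -- integral
  have hcont := oddExt_continuous f₂ hc2 hf20
  have hsplit : (∫ s in (r - t)..(r + t), oddExt f₂ s)
      = (∫ s in (r - t)..(-(r - t)), oddExt f₂ s) + ∫ s in (-(r - t))..(r + t), oddExt f₂ s := by
    rw [intervalIntegral.integral_add_adjacent_intervals] <;>
      exact hcont.intervalIntegrable _ _
  have hI1 : (∫ s in (r - t)..(-(r - t)), oddExt f₂ s) = 0 := by
    have := integral_oddExt_symm f₂ hc2 hf20 (-(r - t))
    simpa using this
  have hI2 : (∫ s in (-(r - t))..(r + t), oddExt f₂ s) = 0 := by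
    rw [intervalIntegral.integral_congr (g := fun _ => 0)]
    · simp
    · intro x hx
      rw [Set.uIcc_of_le (by linarith)] at hx
      exact hzz x (by rw [abs_of_nonneg (by linarith [hx.1])]; linarith [hx.1])
  rw [h1, h2, hsplit, hI1, hI2]
  simp
end
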